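/- Define, for δ ∈ (0,1/2), the surface integrals A_x(δ) = −∫_{∂B₁} χ_{p_δ>0} x² dS, A_y(δ) = −∫_{∂B₁} χ_{p_δ>0} y² dS, and A(δ) = −∫_{∂B₁} χ_{p_δ>0} dS, where p_δ = (1/2+δ)x² + (1/2−δ)y² − z². Then (1+2δ)·(3A_y(δ)−A(δ))/(3A_x(δ)−A(δ)) − 1 + 2δ ≤ 4δ for all δ ∈ (0,1/2). -/

import Mathlib

open MeasureTheory Metric
open scoped NNReal ENNReal

noncomputable section

abbrev E3 := EuclideanSpace ℝ (Fin 3)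

/-- The family `p_δ(x,y,z) = (1/2+δ)x² + (1/2−δ)y² − z²`. -/
def pdelta (δ : ℝ) (v : E3) : ℝ :=
  (1/2 + δ) * (v 0) ^ 2 + (1/2 - δ) * (v 1) ^ 2 - (v 2) ^ 2


def capf (a : Fin 2 → ℝ) : E3 := WithLp.toLp 2 ![a 0, a 1, Real.sqrt (1 - (a 0)^2 - (a 1)^2)]

def capS : Set (Fin 2 → ℝ) := {a | (a 0)^2 + (a 1)^2 ≤ 2/3}

lemma sqrt_lip {x y : ℝ} (hx : 1/3 ≤ x) (hy : 1/3 ≤ y) :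
    (Real.sqrt x - Real.sqrt y)^2 ≤ (x - y)^2 := by
  have hx0 : (0:ℝ) ≤ x := by linarith
  have hy0 : (0:ℝ) ≤ y := by linarith
  have hux : Real.sqrt x ^ 2 = x := Real.sq_sqrt hx0
  have huy : Real.sqrt y ^ 2 = y := Real.sq_sqrt hy0
  have h1 : (1:ℝ)/2 ≤ Real.sqrt x := by
    rw [show (1:ℝ)/2 = Real.sqrt (1/4) by rw [show (1:ℝ)/4 = (1/2)^2 by norm_num, Real.sqrt_sq]; norm_num]
    exact Real.sqrt_le_sqrt (by linarith)
  have h2 : (1:ℝ)/2 ≤ Real.sqrt y := by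
    rw [show (1:ℝ)/2 = Real.sqrt (1/4) by rw [show (1:ℝ)/4 = (1/2)^2 by norm_num, Real.sqrt_sq]; norm_num]
    exact Real.sqrt_le_sqrt (by linarith)
  have hmul : (Real.sqrt x - Real.sqrt y) * (Real.sqrt x + Real.sqrt y) = x - y := by
    have : (Real.sqrt x - Real.sqrt y) * (Real.sqrt x + Real.sqrt y)
        = Real.sqrt x ^ 2 - Real.sqrt y ^ 2 := by ring
    rw [this, hux, huy]
  have key : (x - y)^2 = (Real.sqrt x - Real.sqrt y)^2 * (Real.sqrt x + Real.sqrt y)^2 := by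
    rw [← mul_pow, hmul]
  have hge : 1 ≤ (Real.sqrt x + Real.sqrt y)^2 := by nlinarith
  rw [key]
  nlinarith [sq_nonneg (Real.sqrt x - Real.sqrt y)]

lemma capf_lip : LipschitzOnWith 7 capf capS := by
  apply LipschitzOnWith.of_dist_le_mul
  intro a ha b hb
  have hD0 : (0:ℝ) ≤ dist a b := dist_nonneg
  have hd0 : |a 0 - b 0| ≤ dist a b := by
    simpa [Real.dist_eq] using dist_le_pi_dist a b 0
  have hd1 : |a 1 - b 1| ≤ dist a b := by
    simpa [Real.dist_eq] using dist_le_pi_dist a b 1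
  have ha' : (a 0)^2 + (a 1)^2 ≤ 2/3 := ha
  have hb' : (b 0)^2 + (b 1)^2 ≤ 2/3 := hb
  rw [EuclideanSpace.dist_eq]
  rw [show ((7:ℝ≥0):ℝ) * dist a b = Real.sqrt ((7 * dist a b)^2) by
    rw [Real.sqrt_sq (by positivity)]; norm_num]
  apply Real.sqrt_le_sqrt
  have hsq : (Real.sqrt (1 - (a 0)^2 - (a 1)^2) - Real.sqrt (1 - (b 0)^2 - (b 1)^2))^2
      ≤ ((1 - (a 0)^2 - (a 1)^2) - (1 - (b 0)^2 - (b 1)^2))^2 :=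
    sqrt_lip (by linarith) (by linarith)
  have habs0 := abs_le.1 hd0
  have habs1 := abs_le.1 hd1
  rw [Fin.sum_univ_three]
  simp only [Real.dist_eq, sq_abs]
  have e0 : capf a 0 - capf b 0 = a 0 - b 0 := rfl
  have e1 : capf a 1 - capf b 1 = a 1 - b 1 := rfl
  have e2 : capf a 2 - capf b 2 = Real.sqrt (1 - (a 0)^2 - (a 1)^2) - Real.sqrt (1 - (b 0)^2 - (b 1)^2) := rfl
  rw [e0, e1, e2]
  nlinarith [sq_nonneg (a 0 + b 0), sq_nonneg (a 1 + b 1), sq_nonneg (a 0 - b 0), sq_nonneg (a 1 - b 1),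
    sq_nonneg ((a 0 - b 0)*(a 0 + b 0) - (a 1 - b 1)*(a 1 + b 1)), sq_nonneg (dist a b),
    sq_nonneg (a 0), sq_nonneg (a 1), sq_nonneg (b 0), sq_nonneg (b 1)]


lemma sphere_sum_sq {v : E3} (h : v ∈ sphere (0:E3) 1) :
    (v 0)^2 + (v 1)^2 + (v 2)^2 = 1 := by
  have := mem_sphere_zero_iff_norm.1 h
  have h2 : ‖v‖^2 = 1 := by rw [this]; norm_num
  rw [EuclideanSpace.norm_eq] at h2
  rw [Real.sq_sqrt (by positivity)] at h2
  simpa [Fin.sum_univ_three, sq_abs] using h2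

lemma capS_meas : μH[2] capS < ⊤ := by
  have hsub : capS ⊆ Set.univ.pi (fun _ : Fin 2 => Set.Icc (-1:ℝ) 1) := by
    intro a ha
    have ha' : (a 0)^2 + (a 1)^2 ≤ 2/3 := ha
    have key : ∀ j : Fin 2, (a j)^2 ≤ 1 := by
      intro j
      have h0 := sq_nonneg (a 0); have h1 := sq_nonneg (a 1)
      fin_cases j
      · show (a 0)^2 ≤ 1; linarith
      · show (a 1)^2 ≤ 1; linarith
    intro i _
    constructor <;> nlinarith [key i, sq_nonneg (a i + 1), sq_nonneg (a i - 1)]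
  calc μH[2] capS ≤ μH[2] (Set.univ.pi (fun _ : Fin 2 => Set.Icc (-1:ℝ) 1)) := measure_mono hsub
  _ < ⊤ := by
      have : (μH[(2:ℝ)] : Measure (Fin 2 → ℝ)) = volume := by
        have := MeasureTheory.hausdorffMeasure_pi_real (ι := Fin 2)
        simpa using this
      rw [this]
      exact (isCompact_univ_pi fun _ => isCompact_Icc).measure_lt_top

lemma cap_meas : μH[2] (capf '' capS) < ⊤ := by
  calc μH[2] (capf '' capS) ≤ (7:ℝ≥0) ^ (2:ℝ) * μH[2] capS :=
        capf_lip.hausdorffMeasure_image_le (by norm_num)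
  _ < ⊤ := by
      have h1 : ((7:ℝ≥0) : ℝ≥0∞) ^ (2:ℝ) < ⊤ :=
        ENNReal.rpow_lt_top_of_nonneg (by norm_num) (by simp)
      exact ENNReal.mul_lt_top h1 capS_meas

lemma cap_sub : {v : E3 | v ∈ sphere (0:E3) 1 ∧ (v 0)^2 + (v 1)^2 ≤ 2/3 ∧ 0 ≤ v 2}
    ⊆ capf '' capS := by
  rintro v ⟨hv, hle, hz⟩
  refine ⟨![v 0, v 1], hle, ?_⟩
  have hs := sphere_sum_sq hv
  refine PiLp.ext fun k => ?_
  fin_cases k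
  · rfl
  · rfl
  · show Real.sqrt (1 - (v 0)^2 - (v 1)^2) = v 2
    rw [show 1 - (v 0)^2 - (v 1)^2 = (v 2)^2 by linarith]
    exact Real.sqrt_sq hz

def Cap : Set E3 := {v | v ∈ sphere (0:E3) 1 ∧ (v 0)^2 + (v 1)^2 ≤ 2/3 ∧ 0 ≤ v 2}

lemma Cap_meas : μH[2] Cap < ⊤ := lt_of_le_of_lt (measure_mono cap_sub) cap_meas

def permIso (e : Equiv.Perm (Fin 3)) : E3 ≃ₗᵢ[ℝ] E3 :=
  LinearIsometryEquiv.piLpCongrLeft 2 ℝ ℝ e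

lemma permIso_apply (e : Equiv.Perm (Fin 3)) (v : E3) (k : Fin 3) :
    permIso e v k = v (e.symm k) := by
  simp [permIso, LinearIsometryEquiv.piLpCongrLeft_apply, Equiv.piCongrLeft'_apply]

def negIso : E3 ≃ₗᵢ[ℝ] E3 := LinearIsometryEquiv.neg ℝ

lemma mem_sphere_map (f : E3 ≃ₗᵢ[ℝ] E3) {v : E3} (h : v ∈ sphere (0:E3) 1) :
    f v ∈ sphere (0:E3) 1 := by
  rw [mem_sphere_zero_iff_norm] at h ⊢
  rw [f.norm_map]; exact h

lemma mem_aux (i : Fin 3) (w : E3) (hw : w ∈ sphere (0:E3) 1) (hi : 1/3 ≤ (w i)^2) :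
    w ∈ (permIso (Equiv.swap i 2)) '' Cap ∪ (permIso (Equiv.swap i 2)) '' (negIso '' Cap) := by
  set σ := permIso (Equiv.swap i 2) with hσ
  have hap : ∀ v : E3, ∀ k, σ v k = v (Equiv.swap i 2 k) := by
    intro v k; rw [hσ, permIso_apply, Equiv.symm_swap]
  have hinv : ∀ v : E3, σ (σ v) = v := by
    intro v; refine PiLp.ext fun k => ?_; rw [hap, hap, Equiv.swap_apply_self]
  set u := σ w with hu
  have hus : u ∈ sphere (0:E3) 1 := mem_sphere_map σ hw
  have hu2 : u 2 = w i := by rw [hu, hap, Equiv.swap_apply_right]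
  have husq := sphere_sum_sq hus
  have hle : (u 0)^2 + (u 1)^2 ≤ 2/3 := by
    have h22 : (u 2)^2 = (w i)^2 := by rw [hu2]
    nlinarith [hi, husq, h22]
  rcases le_or_gt 0 (w i) with hpos | hneg
  · left
    exact ⟨u, ⟨hus, hle, by rw [hu2]; exact hpos⟩, hinv w⟩
  · right
    have hc : negIso u ∈ Cap := by
      refine ⟨mem_sphere_map negIso hus, ?_, ?_⟩
      · have e0 : negIso u 0 = -(u 0) := rfl
        have e1 : negIso u 1 = -(u 1) := rfl
        rw [e0, e1]; simpa using hle
      · have e2 : negIso u 2 = -(u 2) := rfl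
        rw [e2, hu2]; linarith
    refine ⟨u, ⟨negIso u, hc, ?_⟩, hinv w⟩
    refine PiLp.ext fun k => ?_
    exact neg_neg _

lemma sphere_cover : sphere (0:E3) 1 ⊆ ⋃ i : Fin 3,
    ((permIso (Equiv.swap i 2)) '' Cap ∪ (permIso (Equiv.swap i 2)) '' (negIso '' Cap)) := by
  intro w hw
  have hsum := sphere_sum_sq hw
  have : 1/3 ≤ (w 0)^2 ∨ 1/3 ≤ (w 1)^2 ∨ 1/3 ≤ (w 2)^2 := by
    by_contra h; push_neg at h; obtain ⟨h0, h1, h2⟩ := h; linarith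
  rcases this with h | h | h
  · exact Set.mem_iUnion.2 ⟨0, mem_aux 0 w hw h⟩
  · exact Set.mem_iUnion.2 ⟨1, mem_aux 1 w hw h⟩
  · exact Set.mem_iUnion.2 ⟨2, mem_aux 2 w hw h⟩

lemma sphere_meas : μH[2] (sphere (0:E3) 1) < ⊤ := by
  refine lt_of_le_of_lt (measure_mono sphere_cover) ?_
  refine lt_of_le_of_lt (measure_iUnion_le _) ?_
  rw [tsum_fintype]
  refine ENNReal.sum_lt_top.2 fun i _ => ?_
  refine lt_of_le_of_lt (measure_union_le _ _) ?_
  have h1 : μH[2] ((permIso (Equiv.swap i 2)) '' Cap) = μH[2] Cap := by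
    exact (permIso (Equiv.swap i 2)).toIsometryEquiv.hausdorffMeasure_image 2 Cap
  have h2 : μH[2] ((permIso (Equiv.swap i 2)) '' (negIso '' Cap)) = μH[2] Cap := by
    exact ((permIso (Equiv.swap i 2)).toIsometryEquiv.hausdorffMeasure_image 2 _).trans
      (negIso.toIsometryEquiv.hausdorffMeasure_image 2 Cap)
  rw [h1, h2]
  exact ENNReal.add_lt_top.2 ⟨Cap_meas, Cap_meas⟩

instance : IsFiniteMeasure (μH[2].restrict (sphere (0:E3) 1)) := by
  constructor
  rw [Measure.restrict_apply_univ]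
  exact sphere_meas

lemma pdelta_cont (δ : ℝ) : Continuous (pdelta δ) := by
  unfold pdelta
  fun_prop

lemma apply_cont (k : Fin 3) : Continuous (fun v : E3 => v k) := by fun_prop

lemma integrable_aux {g : E3 → ℝ} (hg : Measurable g) (hb : ∀ v ∈ sphere (0:E3) 1, ‖g v‖ ≤ 1) :
    Integrable g (μH[2].restrict (sphere (0:E3) 1)) := by
  refine ⟨hg.aestronglyMeasurable, ?_⟩
  apply HasFiniteIntegral.of_bounded (C := 1)
  exact (ae_restrict_iff' isClosed_sphere.measurableSet).2 (Filter.Eventually.of_forall hb)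

lemma meas_ite {p : E3 → ℝ} (hp : Measurable p) {g : E3 → ℝ} (hg : Measurable g) :
    Measurable (fun v => if 0 < p v then g v else 0) := by
  exact Measurable.ite (measurableSet_lt measurable_const hp) hg measurable_const

lemma sq_le_one {v : E3} (hv : v ∈ sphere (0:E3) 1) (k : Fin 3) : (v k)^2 ≤ 1 := by
  have h := sphere_sum_sq hv
  have h0 := sq_nonneg (v 0); have h1 := sq_nonneg (v 1); have h2 := sq_nonneg (v 2)
  fin_cases k
  · show (v 0)^2 ≤ 1; linarith
  · show (v 1)^2 ≤ 1; linarith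
  · show (v 2)^2 ≤ 1; linarith

-- substitution
lemma subst_lemma (e : Equiv.Perm (Fin 3)) (g : E3 → ℝ) :
    ∫ v in sphere (0:E3) 1, g (permIso e v) ∂μH[2] = ∫ v in sphere (0:E3) 1, g v ∂μH[2] := by
  have mp : MeasurePreserving (permIso e) μH[2] μH[2] :=
    (permIso e).toIsometryEquiv.measurePreserving_hausdorffMeasure 2
  have hemb : MeasurableEmbedding (permIso e) :=
    (permIso e).toIsometryEquiv.toHomeomorph.measurableEmbedding
  have hpre : (permIso e) ⁻¹' (sphere (0:E3) 1) = sphere (0:E3) 1 := by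
    ext v
    simp only [Set.mem_preimage, mem_sphere_zero_iff_norm]
    rw [(permIso e).norm_map]
  nth_rewrite 1 [← hpre]
  exact mp.setIntegral_preimage_emb hemb g _


lemma key (δ : ℝ) (i j : Fin 3) (c : ℝ)
    (hσ : ∀ v : E3, pdelta δ (permIso (Equiv.swap i j) v) =
      pdelta δ v - c * ((v i)^2 - (v j)^2)) (hc : 0 ≤ c) :
    ∫ v in sphere (0:E3) 1, (if 0 < pdelta δ v then (v j)^2 else 0) ∂μH[2]
      ≤ ∫ v in sphere (0:E3) 1, (if 0 < pdelta δ v then (v i)^2 else 0) ∂μH[2] := by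
  set σ := permIso (Equiv.swap i j) with hσdef
  have happ : ∀ (v : E3) (k : Fin 3), σ v k = v (Equiv.swap i j k) := fun v k => by
    rw [hσdef, permIso_apply, Equiv.symm_swap]
  set Fi : E3 → ℝ := fun v => if 0 < pdelta δ v then (v i)^2 else 0 with hFi
  set Fj : E3 → ℝ := fun v => if 0 < pdelta δ v then (v j)^2 else 0 with hFj
  set G : E3 → ℝ := fun v => if 0 < pdelta δ (σ v) then (v i)^2 else 0 with hG
  set G' : E3 → ℝ := fun v => if 0 < pdelta δ (σ v) then (v j)^2 else 0 with hG'
  have hps : Measurable (fun v => pdelta δ (σ v)) :=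
    ((pdelta_cont δ).comp σ.continuous).measurable
  have hb : ∀ (q : E3 → ℝ) (k : Fin 3), ∀ v ∈ sphere (0:E3) 1,
      ‖if 0 < q v then (v k)^2 else 0‖ ≤ 1 := by
    intro q k v hv
    rw [Real.norm_eq_abs]
    split_ifs
    · rw [abs_of_nonneg (sq_nonneg _)]; exact sq_le_one hv k
    · simp
  have hIi : Integrable Fi (μH[2].restrict (sphere (0:E3) 1)) :=
    integrable_aux (meas_ite (pdelta_cont δ).measurable ((apply_cont i).measurable.pow_const 2)) (hb _ i)
  have hIj : Integrable Fj (μH[2].restrict (sphere (0:E3) 1)) :=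
    integrable_aux (meas_ite (pdelta_cont δ).measurable ((apply_cont j).measurable.pow_const 2)) (hb _ j)
  have hIG : Integrable G (μH[2].restrict (sphere (0:E3) 1)) :=
    integrable_aux (meas_ite hps ((apply_cont i).measurable.pow_const 2)) (hb _ i)
  have hIG' : Integrable G' (μH[2].restrict (sphere (0:E3) 1)) :=
    integrable_aux (meas_ite hps ((apply_cont j).measurable.pow_const 2)) (hb _ j)
  have e1 : ∫ v in sphere (0:E3) 1, G v ∂μH[2] = ∫ v in sphere (0:E3) 1, Fj v ∂μH[2] := by
    rw [← subst_lemma (Equiv.swap i j) Fj]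
    have : (fun v => Fj (σ v)) = G := by
      funext v
      rw [hFj, hG]
      simp only
      rw [happ v j, Equiv.swap_apply_right]
    rw [← this]
  have e2 : ∫ v in sphere (0:E3) 1, G' v ∂μH[2] = ∫ v in sphere (0:E3) 1, Fi v ∂μH[2] := by
    rw [← subst_lemma (Equiv.swap i j) Fi]
    have : (fun v => Fi (σ v)) = G' := by
      funext v
      rw [hFi, hG']
      simp only
      rw [happ v i, Equiv.swap_apply_left]
    rw [← this]
  have hpt : ∀ v : E3, 0 ≤ (Fi v - G v) - (Fj v - G' v) := by
    intro v
    have hd := hσ v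
    rw [hFi, hFj, hG, hG']
    simp only
    rcases le_total ((v j)^2) ((v i)^2) with h | h
    · have hle : pdelta δ (σ v) ≤ pdelta δ v := by rw [hd]; nlinarith
      split_ifs <;> linarith
    · have hle : pdelta δ v ≤ pdelta δ (σ v) := by rw [hd]; nlinarith
      split_ifs <;> linarith
  have hint : 0 ≤ ∫ v in sphere (0:E3) 1, ((Fi v - G v) - (Fj v - G' v)) ∂μH[2] :=
    setIntegral_nonneg isClosed_sphere.measurableSet fun v _ => hpt v
  have hs1 := integral_sub hIi hIG
  have hs2 := integral_sub hIj hIG'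
  have hs3 := integral_sub (hIi.sub hIG) (hIj.sub hIG')
  simp only [Pi.sub_apply] at hs1 hs2 hs3
  linarith [hint, e1, e2, hs1, hs2, hs3]

/-- `A_x(δ) = −∫_{∂B₁} χ_{p_δ>0} x² dS` (surface measure = 2-dimensional Hausdorff
measure on the unit sphere of `ℝ³`). -/
def Ax (δ : ℝ) : ℝ :=
  -∫ v in sphere (0 : E3) 1, (if 0 < pdelta δ v then (v 0) ^ 2 else 0) ∂μH[2]

/-- `A_y(δ) = −∫_{∂B₁} χ_{p_δ>0} y² dS`. -/
def Ay (δ : ℝ) : ℝ :=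
  -∫ v in sphere (0 : E3) 1, (if 0 < pdelta δ v then (v 1) ^ 2 else 0) ∂μH[2]

/-- `A(δ) = −∫_{∂B₁} χ_{p_δ>0} dS`. -/
def Atot (δ : ℝ) : ℝ :=
  -∫ v in sphere (0 : E3) 1, (if 0 < pdelta δ v then (1 : ℝ) else 0) ∂μH[2]

lemma swap_formula (δ : ℝ) (i j : Fin 3) (v : E3) :
    ∀ k : Fin 3, permIso (Equiv.swap i j) v k = v (Equiv.swap i j k) := fun k => by
  rw [permIso_apply, Equiv.symm_swap]

lemma key01 (δ : ℝ) (hδ : 0 < δ) :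
    ∫ v in sphere (0:E3) 1, (if 0 < pdelta δ v then (v 1)^2 else 0) ∂μH[2]
      ≤ ∫ v in sphere (0:E3) 1, (if 0 < pdelta δ v then (v 0)^2 else 0) ∂μH[2] := by
  apply key δ 0 1 (2*δ) _ (by linarith)
  intro v
  have h0 := swap_formula δ 0 1 v 0
  have h1 := swap_formula δ 0 1 v 1
  have h2 := swap_formula δ 0 1 v 2
  rw [Equiv.swap_apply_left] at h0
  rw [Equiv.swap_apply_right] at h1
  rw [Equiv.swap_apply_of_ne_of_ne (by decide) (by decide)] at h2
  unfold pdelta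
  rw [h0, h1, h2]
  ring

lemma key02 (δ : ℝ) (hδ : 0 < δ) :
    ∫ v in sphere (0:E3) 1, (if 0 < pdelta δ v then (v 2)^2 else 0) ∂μH[2]
      ≤ ∫ v in sphere (0:E3) 1, (if 0 < pdelta δ v then (v 0)^2 else 0) ∂μH[2] := by
  apply key δ 0 2 (3/2 + δ) _ (by linarith)
  intro v
  have h0 := swap_formula δ 0 2 v 0
  have h1 := swap_formula δ 0 2 v 1
  have h2 := swap_formula δ 0 2 v 2
  rw [Equiv.swap_apply_left] at h0
  rw [Equiv.swap_apply_right] at h2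
  rw [Equiv.swap_apply_of_ne_of_ne (by decide) (by decide)] at h1
  unfold pdelta
  rw [h0, h1, h2]
  ring

lemma key12 (δ : ℝ) (hδ : δ < 1/2) :
    ∫ v in sphere (0:E3) 1, (if 0 < pdelta δ v then (v 2)^2 else 0) ∂μH[2]
      ≤ ∫ v in sphere (0:E3) 1, (if 0 < pdelta δ v then (v 1)^2 else 0) ∂μH[2] := by
  apply key δ 1 2 (3/2 - δ) _ (by linarith)
  intro v
  have h0 := swap_formula δ 1 2 v 0
  have h1 := swap_formula δ 1 2 v 1
  have h2 := swap_formula δ 1 2 v 2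
  rw [Equiv.swap_apply_left] at h1
  rw [Equiv.swap_apply_right] at h2
  rw [Equiv.swap_apply_of_ne_of_ne (by decide) (by decide)] at h0
  unfold pdelta
  rw [h0, h1, h2]
  ring

lemma Atot_split (δ : ℝ) :
    ∫ v in sphere (0:E3) 1, (if 0 < pdelta δ v then (1:ℝ) else 0) ∂μH[2]
      = (∫ v in sphere (0:E3) 1, (if 0 < pdelta δ v then (v 0)^2 else 0) ∂μH[2])
        + (∫ v in sphere (0:E3) 1, (if 0 < pdelta δ v then (v 1)^2 else 0) ∂μH[2])
        + (∫ v in sphere (0:E3) 1, (if 0 < pdelta δ v then (v 2)^2 else 0) ∂μH[2]) := by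
  have hb : ∀ (k : Fin 3), ∀ v ∈ sphere (0:E3) 1,
      ‖if 0 < pdelta δ v then (v k)^2 else 0‖ ≤ 1 := by
    intro k v hv
    rw [Real.norm_eq_abs]
    split_ifs
    · rw [abs_of_nonneg (sq_nonneg _)]; exact sq_le_one hv k
    · simp
  have hI : ∀ k : Fin 3, Integrable (fun v => if 0 < pdelta δ v then (v k)^2 else 0)
      (μH[2].restrict (sphere (0:E3) 1)) := fun k =>
    integrable_aux (meas_ite (pdelta_cont δ).measurable ((apply_cont k).measurable.pow_const 2))
      (hb k)
  have hcg : ∫ v in sphere (0:E3) 1, (if 0 < pdelta δ v then (1:ℝ) else 0) ∂μH[2]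
      = ∫ v in sphere (0:E3) 1, ((if 0 < pdelta δ v then (v 0)^2 else 0)
        + (if 0 < pdelta δ v then (v 1)^2 else 0)
        + (if 0 < pdelta δ v then (v 2)^2 else 0)) ∂μH[2] := by
    apply setIntegral_congr_fun isClosed_sphere.measurableSet
    intro v hv
    have hs := sphere_sum_sq hv
    by_cases h : 0 < pdelta δ v
    · simp only [if_pos h]; linarith
    · simp [h]
  have g1 := integral_add ((hI 0).add (hI 1)) (hI 2)
  have g2 := integral_add (hI 0) (hI 1)
  simp only [Pi.add_apply] at g1 g2
  rw [hcg, g1, g2]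

/-- `(1+2δ)·(3A_y(δ)−A(δ))/(3A_x(δ)−A(δ)) − 1 + 2δ ≤ 4δ` for all `δ ∈ (0,1/2)`. -/
theorem stmt6 (δ : ℝ) (hδ : δ ∈ Set.Ioo (0 : ℝ) (1/2)) :
    (1 + 2*δ) * (3 * Ay δ - Atot δ) / (3 * Ax δ - Atot δ) - 1 + 2*δ ≤ 4*δ := by
  obtain ⟨hδ0, hδ1⟩ := hδ
  set I0 := ∫ v in sphere (0:E3) 1, (if 0 < pdelta δ v then (v 0)^2 else 0) ∂μH[2] with hI0
  set I1 := ∫ v in sphere (0:E3) 1, (if 0 < pdelta δ v then (v 1)^2 else 0) ∂μH[2] with hI1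
  set I2 := ∫ v in sphere (0:E3) 1, (if 0 < pdelta δ v then (v 2)^2 else 0) ∂μH[2] with hI2
  have hAx : Ax δ = -I0 := rfl
  have hAy : Ay δ = -I1 := rfl
  have hAt : Atot δ = -(I0 + I1 + I2) := by
    rw [Atot, Atot_split δ]
  have h01 : I1 ≤ I0 := key01 δ hδ0
  have h02 : I2 ≤ I0 := key02 δ hδ0
  have h12 : I2 ≤ I1 := key12 δ hδ1
  set D := 3 * Ax δ - Atot δ with hD
  set N := 3 * Ay δ - Atot δ with hN
  have hDval : D = I1 + I2 - 2*I0 := by rw [hD, hAx, hAt]; ring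
  have hNval : N = I0 + I2 - 2*I1 := by rw [hN, hAy, hAt]; ring
  have hDle : D ≤ 0 := by rw [hDval]; linarith
  have hND : D ≤ N := by rw [hDval, hNval]; linarith
  rcases eq_or_lt_of_le hDle with hD0 | hDneg
  · rw [hD0, div_zero]
    linarith
  · have hq : N / D ≤ 1 := by
      have h1 : (N - D) / D = N / D - 1 := by rw [sub_div, div_self hDneg.ne]
      have h2 : (N - D) / D ≤ 0 :=
        div_nonpos_of_nonneg_of_nonpos (by linarith) (le_of_lt hDneg)
      linarith
    have h3 : (1 + 2*δ) * N / D = (1 + 2*δ) * (N / D) := mul_div_assoc _ _ _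
    have h4 : (1 + 2*δ) * (N / D) ≤ (1 + 2*δ) * 1 :=
      mul_le_mul_of_nonneg_left hq (by linarith)
    rw [h3]
    linarith

end
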